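/- Suppose the digraph D is acyclic. Then the enumeration algorithm for the monoid resource constrained shortest path problem terminates after finitely many iterations, and upon termination the maintained value c_od^UB equals the cost of an optimal feasible o–d path if one exists and +∞ otherwise. -/

import Mathlib

/-- Walks in a digraph given by an arc relation `A` on vertices `V`. -/
inductive Walk (V : Type) (A : V → V → Prop) : V → V → Type
  | nil (v : V) : Walk V A v v
  | cons {u v w : V} (h : A u v) (p : Walk V A v w) : Walk V A u w

/-- The resource of a walk: `⊕` of the arc resources along the walk. -/
def Walk.res {V : Type} {A : V → V → Prop} {M : Type}
    (op : M → M → M) (e : M) (q : ∀ u v, A u v → M) :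
    ∀ {u w : V}, Walk V A u w → M
  | _, _, .nil _ => e
  | _, _, .cons h p => op (q _ _ h) (p.res op e q)

/-- Extending a walk by one arc at its end. -/
def Walk.snoc {V : Type} {A : V → V → Prop} :
    ∀ {u v w : V}, Walk V A u v → A v w → Walk V A u w
  | _, _, _, .nil _, h => .cons h (.nil _)
  | _, _, _, .cons ha p, h => .cons ha (p.snoc h)

section Algorithm

variable {M : Type} (op : M → M → M) (e : M) (c : M → ℝ) (ρ : M → ℕ)
  {V : Type} (A : V → V → Prop) (q : ∀ u v : V, A u v → M) (o d : V)
  (B : V → Set M)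

/-- A partial path: a walk from the origin `o` to some vertex. -/
abbrev PartialPath := Σ v : V, Walk V A o v

/-- `key(P) = min {c(q_P ⊕ b) : b ∈ B_v, ρ(q_P ⊕ b) = 0}`, with `min ∅ = +∞`,
where `v` is the last vertex of `P`. -/
noncomputable def key (P : PartialPath A o) : EReal :=
  sInf {x : EReal | ∃ b ∈ B P.1, ρ (op (P.2.res op e q) b) = 0 ∧
    x = ((c (op (P.2.res op e q) b) : ℝ) : EReal)}

/-- The state of the enumeration algorithm: the list `L` of partial paths and
the incumbent upper bound `c_od^UB`. -/
structure AlgState (V : Type) (A : V → V → Prop) (o : V) where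
  L : Set (PartialPath A o)
  ub : EReal

/-- The initial state: `L` contains only the empty path at `o`, `c_od^UB = +∞`. -/
noncomputable def initState : AlgState V A o := ⟨{⟨o, .nil o⟩}, ⊤⟩

/-- One iteration of the enumeration algorithm: extract from `L` a path `P` of
minimum key; if `P` is a feasible `o`–`d` path of cost below the incumbent,
update the incumbent; otherwise insert into `L` every extension `P + a` with
`key(P + a)` below the incumbent. -/
def algStep (s s' : AlgState V A o) : Prop :=
  ∃ P ∈ s.L, (∀ P' ∈ s.L, key op e c ρ A q o B P ≤ key op e c ρ A q o B P') ∧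
    ((P.1 = d ∧ ρ (P.2.res op e q) = 0 ∧
        ((c (P.2.res op e q) : ℝ) : EReal) < s.ub ∧
        s'.L = s.L \ {P} ∧ s'.ub = ((c (P.2.res op e q) : ℝ) : EReal))
     ∨ (¬(P.1 = d ∧ ρ (P.2.res op e q) = 0 ∧
          ((c (P.2.res op e q) : ℝ) : EReal) < s.ub) ∧
        s'.ub = s.ub ∧
        s'.L = (s.L \ {P}) ∪ {P' | ∃ w, ∃ h : A P.1 w,
          P' = ⟨w, P.2.snoc h⟩ ∧ key op e c ρ A q o B ⟨w, P.2.snoc h⟩ < s.ub}))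

/-- The optimal value of the monoid resource constrained shortest path problem:
the least cost of a feasible `o`–`d` path (`+∞` if none exists). -/
noncomputable def optValue : EReal :=
  sInf {x : EReal | ∃ P : Walk V A o d, ρ (P.res op e q) = 0 ∧
    x = ((c (P.res op e q) : ℝ) : EReal)}

end Algorithm


section Aux

namespace Walk
variable {V : Type} {A : V → V → Prop}

def append : ∀ {u v w : V}, Walk V A u v → Walk V A v w → Walk V A u w
  | _, _, _, .nil _, R => R
  | _, _, _, .cons h p, R => .cons h (p.append R)

def len : ∀ {u v : V}, Walk V A u v → ℕ
  | _, _, .nil _ => 0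
  | _, _, .cons _ p => p.len + 1

def support : ∀ {u v : V}, Walk V A u v → List V
  | _, _, .nil v => [v]
  | u, _, .cons _ p => u :: p.support

def unsnoc : ∀ {u w : V}, Walk V A u w → Option (Σ v : V, Walk V A u v)
  | _, _, .nil _ => none
  | u, _, .cons h p =>
      some (match p.unsnoc with
        | none => ⟨u, .nil u⟩
        | some ⟨x, W⟩ => ⟨x, .cons h W⟩)

theorem unsnoc_snoc : ∀ {u v w : V} (W : Walk V A u v) (h : A v w),
    (W.snoc h).unsnoc = some ⟨v, W⟩
  | _, _, _, .nil _, h => rfl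
  | _, _, _, .cons ha p, h => by
      show some _ = _
      rw [unsnoc_snoc p h]

theorem len_snoc : ∀ {u v w : V} (W : Walk V A u v) (h : A v w),
    (W.snoc h).len = W.len + 1
  | _, _, _, .nil _, _ => rfl
  | _, _, _, .cons ha p, h => by
      show (p.snoc h).len + 1 = _
      rw [len_snoc p h]; rfl

theorem res_append {M : Type} (op : M → M → M) (e : M) (q : ∀ u v, A u v → M)
    (hassoc : ∀ x y z : M, op (op x y) z = op x (op y z))
    (hneutral : ∀ x : M, op e x = x ∧ op x e = x) :
    ∀ {u v w : V} (P : Walk V A u v) (R : Walk V A v w),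
      (P.append R).res op e q = op (P.res op e q) (R.res op e q)
  | _, _, _, .nil _, R => ((hneutral _).1).symm
  | _, _, _, .cons h p, R => by
      show op _ ((p.append R).res op e q) = _
      rw [res_append op e q hassoc hneutral p R, ← hassoc]; rfl

theorem append_nil : ∀ {u v : V} (P : Walk V A u v), P.append (.nil v) = P
  | _, _, .nil _ => rfl
  | _, _, .cons h p => by show Walk.cons h (p.append _) = _; rw [append_nil p]

theorem snoc_append : ∀ {u v w x : V} (P : Walk V A u v) (h : A v w) (R : Walk V A w x),
    (P.snoc h).append R = P.append (.cons h R)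
  | _, _, _, _, .nil _, h, R => rfl
  | _, _, _, _, .cons ha p, h, R => by
      show Walk.cons ha ((p.snoc h).append R) = _
      rw [snoc_append p h R]; rfl

theorem mem_support_reflTransGen : ∀ {u w : V} (W : Walk V A u w) {x : V},
    x ∈ W.support → Relation.ReflTransGen A u x
  | _, _, .nil v, x, hx => by
      simp only [support, List.mem_singleton] at hx; subst hx; rfl
  | u, _, .cons h p, x, hx => by
      rcases List.mem_cons.1 hx with h1 | h2
      · subst h1; rfl
      · exact (Relation.ReflTransGen.single h).trans (mem_support_reflTransGen p h2)

theorem reflTransGen_of_walk : ∀ {u w : V} (W : Walk V A u w), Relation.ReflTransGen A u w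
  | _, _, .nil _ => .refl
  | _, _, .cons h p => (Relation.ReflTransGen.single h).trans (reflTransGen_of_walk p)

theorem support_nodup (hacyclic : ∀ v : V, ¬ Relation.TransGen A v v) :
    ∀ {u w : V} (W : Walk V A u w), W.support.Nodup
  | _, _, .nil _ => List.nodup_singleton _
  | u, _, .cons h p => by
      refine List.nodup_cons.2 ⟨fun hmem => ?_, support_nodup hacyclic p⟩
      exact hacyclic u ((Relation.TransGen.head' h (mem_support_reflTransGen p hmem)))

theorem length_support : ∀ {u w : V} (W : Walk V A u w), W.support.length = W.len + 1
  | _, _, .nil _ => rfl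
  | _, _, .cons h p => by
      show (support p).length + 1 = p.len + 1 + 1; rw [length_support p]

theorem eq_nil_of_self (hacyclic : ∀ v : V, ¬ Relation.TransGen A v v) {v : V}
    (W : Walk V A v v) : W = .nil v := by
  cases W with
  | nil => rfl
  | cons h p => exact absurd (Relation.TransGen.head' h (reflTransGen_of_walk p)) (hacyclic _)

theorem support_inj : ∀ {u v₁ v₂ : V} (W₁ : Walk V A u v₁) (W₂ : Walk V A u v₂),
    W₁.support = W₂.support → (⟨v₁, W₁⟩ : Σ v, Walk V A u v) = ⟨v₂, W₂⟩
  | _, _, _, .nil _, .nil _, _ => rfl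
  | _, _, _, .nil _, .cons h p, hs => by
      exfalso
      have := congrArg List.length hs
      simp [support, length_support] at this
  | _, _, _, .cons h p, .nil _, hs => by
      exfalso
      have := congrArg List.length hs
      simp [support, length_support] at this
  | u, _, _, .cons (v := a) h p, .cons (v := b) h' p', hs => by
      have htail : p.support = p'.support := by
        simpa [support] using hs
      have hab : a = b := by
        have h1 : p.support.head? = some a := by cases p <;> rfl
        have h2 : p'.support.head? = some b := by cases p' <;> rfl
        rw [htail, h2] at h1; exact (Option.some_inj.1 h1).symm
      subst hab
      have := support_inj p p' htail
      rw [Sigma.mk.inj_iff] at this ⊢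
      refine ⟨this.1, ?_⟩
      rcases this with ⟨rfl, h2⟩
      rw [heq_iff_eq] at h2 ⊢
      rw [h2]

end Walk

theorem partialPath_finite {V : Type} [Fintype V] {A : V → V → Prop}
    (hacyclic : ∀ v : V, ¬ Relation.TransGen A v v) (o : V) :
    Finite (Σ v : V, Walk V A o v) := by
  haveI : Finite {l : List V // l.length ≤ Fintype.card V} :=
    (List.finite_length_le V (Fintype.card V)).to_subtype
  refine Finite.of_injective (fun P : Σ v : V, Walk V A o v =>
    (⟨P.2.support, (Walk.support_nodup hacyclic P.2).length_le_card⟩ :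
      {l : List V // l.length ≤ Fintype.card V})) ?_
  intro P Q h
  exact Walk.support_inj P.2 Q.2 (congrArg Subtype.val h)

theorem key_le_cost
    {M : Type} (op : M → M → M) (e : M) (le : M → M → Prop)
    (hcompat : ∀ x y z : M, le x y → le (op x z) (op y z) ∧ le (op z x) (op z y))
    (c : M → ℝ) (ρ : M → ℕ)
    (hc_mono : ∀ x y : M, le x y → c x ≤ c y)
    (hρ_mono : ∀ x y : M, le x y → ρ x ≤ ρ y)
    {V : Type} (A : V → V → Prop) (q : ∀ u v : V, A u v → M) (o d : V)
    (B : V → Set M)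
    (hB : ∀ (v : V) (Q : Walk V A v d), ∃ b ∈ B v, le b (Q.res op e q))
    (v : V) (W : Walk V A o v) (R : Walk V A v d)
    (hfeas : ρ (op (W.res op e q) (R.res op e q)) = 0) :
    key op e c ρ A q o B ⟨v, W⟩ ≤ ((c (op (W.res op e q) (R.res op e q)) : ℝ) : EReal) := by
  obtain ⟨b, hbB, hble⟩ := hB v R
  have hle2 : le (op (W.res op e q) b) (op (W.res op e q) (R.res op e q)) :=
    (hcompat b (R.res op e q) (W.res op e q) hble).2
  have hρb : ρ (op (W.res op e q) b) = 0 := by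
    have := hρ_mono _ _ hle2
    rw [hfeas] at this
    exact Nat.le_zero.mp this
  unfold key
  calc sInf {x : EReal | ∃ b ∈ B (⟨v, W⟩ : PartialPath A o).1,
        ρ (op ((⟨v, W⟩ : PartialPath A o).2.res op e q) b) = 0 ∧
        x = ((c (op ((⟨v, W⟩ : PartialPath A o).2.res op e q) b) : ℝ) : EReal)}
      ≤ ((c (op (W.res op e q) b) : ℝ) : EReal) := sInf_le ⟨b, hbB, hρb, rfl⟩
    _ ≤ _ := EReal.coe_le_coe_iff.2 (hc_mono _ _ hle2)

theorem alg_inv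
    {M : Type} (op : M → M → M) (e : M) (le : M → M → Prop)
    (hassoc : ∀ x y z : M, op (op x y) z = op x (op y z))
    (hneutral : ∀ x : M, op e x = x ∧ op x e = x)
    (hcompat : ∀ x y z : M, le x y → le (op x z) (op y z) ∧ le (op z x) (op z y))
    (c : M → ℝ) (ρ : M → ℕ)
    (hc_mono : ∀ x y : M, le x y → c x ≤ c y)
    (hρ_mono : ∀ x y : M, le x y → ρ x ≤ ρ y)
    {V : Type} (A : V → V → Prop)
    (hacyclic : ∀ v : V, ¬ Relation.TransGen A v v)
    (q : ∀ u v : V, A u v → M) (o d : V) (B : V → Set M)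
    (hB : ∀ (v : V) (Q : Walk V A v d), ∃ b ∈ B v, le b (Q.res op e q))
    (f : ℕ → AlgState V A o) (h0 : f 0 = initState A o) (N : ℕ)
    (hsteps : ∀ i < N, algStep op e c ρ A q o d B (f i) (f (i + 1))) :
    ((f N).ub = ⊤ ∨ ∃ Q : Walk V A o d, ρ (Q.res op e q) = 0 ∧
        (f N).ub = ((c (Q.res op e q) : ℝ) : EReal)) ∧
      ∀ Q : Walk V A o d, ρ (Q.res op e q) = 0 →
        ((f N).ub ≤ ((c (Q.res op e q) : ℝ) : EReal) ∨
          ∃ (v : V) (P : Walk V A o v) (R : Walk V A v d),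
            P.append R = Q ∧ (⟨v, P⟩ : PartialPath A o) ∈ (f N).L) := by
  induction N with
  | zero =>
    rw [h0]
    constructor
    · exact Or.inl rfl
    · intro Q hQ
      exact Or.inr ⟨o, .nil o, Q, rfl, rfl⟩
  | succ N ih =>
    obtain ⟨IH1, IH2⟩ := ih (fun i hi => hsteps i (Nat.lt_succ_of_lt hi))
    have step := hsteps N (Nat.lt_succ_self N)
    unfold algStep at step
    obtain ⟨P₀, hP₀mem, -, hbr⟩ := step
    constructor
    · rcases hbr with ⟨hd, hρ0, hlt, hL', hub'⟩ | ⟨hneg, hub', hL'⟩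
      · obtain ⟨v₀, W₀⟩ := P₀
        have hd' : v₀ = d := hd
        subst hd'
        exact Or.inr ⟨W₀, hρ0, hub'⟩
      · rw [hub']; exact IH1
    · intro Q hQ
      have hub_mono : (f (N + 1)).ub ≤ (f N).ub := by
        rcases hbr with ⟨_, _, hlt, _, hub'⟩ | ⟨_, hub', _⟩
        · rw [hub']; exact le_of_lt hlt
        · rw [hub']
      rcases IH2 Q hQ with hle | ⟨v, Pw, R, happ, hmem⟩
      · exact Or.inl (le_trans hub_mono hle)
      by_cases hPP : (⟨v, Pw⟩ : PartialPath A o) = P₀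
      · subst hPP
        rcases hbr with ⟨hd, hρ0, hlt, hL', hub'⟩ | ⟨hneg, hub', hL'⟩
        · -- extracted prefix ends at d, incumbent updated
          have hd' : v = d := hd
          subst hd'
          have hR : R = Walk.nil v := Walk.eq_nil_of_self hacyclic R
          subst hR
          rw [Walk.append_nil] at happ
          subst happ
          exact Or.inl (le_of_eq hub')
        · -- extracted prefix, incumbent not updated
          cases R with
          | nil =>
            rw [Walk.append_nil] at happ
            subst happ
            refine Or.inl ?_
            rw [hub']
            refine not_lt.1 (fun hlt => hneg ⟨rfl, hQ, hlt⟩)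
          | cons h R' =>
            rename_i x
            by_cases hkey : key op e c ρ A q o B ⟨x, Pw.snoc h⟩ < (f N).ub
            · refine Or.inr ⟨x, Pw.snoc h, R', ?_, ?_⟩
              · rw [Walk.snoc_append]; exact happ
              · rw [hL']
                exact Or.inr ⟨x, h, rfl, hkey⟩
            · refine Or.inl ?_
              rw [hub']
              have h1 : (f N).ub ≤ key op e c ρ A q o B ⟨x, Pw.snoc h⟩ := not_lt.1 hkey
              have hres : op ((Pw.snoc h).res op e q) (R'.res op e q) = Q.res op e q := by
                rw [← Walk.res_append op e q hassoc hneutral, Walk.snoc_append, happ]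
              have h2 := key_le_cost op e le hcompat c ρ hc_mono hρ_mono A q o d B hB
                x (Pw.snoc h) R' (by rw [hres]; exact hQ)
              rw [hres] at h2
              exact le_trans h1 h2
      · rcases hbr with ⟨_, _, _, hL', _⟩ | ⟨_, _, hL'⟩
        · exact Or.inr ⟨v, Pw, R, happ, by rw [hL']; exact ⟨hmem, hPP⟩⟩
        · exact Or.inr ⟨v, Pw, R, happ, by rw [hL']; exact Or.inl ⟨hmem, hPP⟩⟩

theorem alg_term
    {M : Type} (op : M → M → M) (e : M) (c : M → ℝ) (ρ : M → ℕ)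
    {V : Type} [Fintype V] (A : V → V → Prop)
    (hacyclic : ∀ v : V, ¬ Relation.TransGen A v v)
    (q : ∀ u v : V, A u v → M) (o d : V) (B : V → Set M) :
    ¬ ∃ f : ℕ → AlgState V A o, f 0 = initState A o ∧
        ∀ n, algStep op e c ρ A q o d B (f n) (f (n + 1)) := by
  rintro ⟨f, h0, hstep⟩
  classical
  haveI hfin : Finite (PartialPath A o) := partialPath_finite hacyclic o
  simp only [algStep] at hstep
  choose P hmem hmin hbr using hstep
  clear hmin
  have hsub : ∀ n, (f (n + 1)).L ⊆ ((f n).L \ {P n}) ∪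
      {X : PartialPath A o | ∃ w, ∃ h : A (P n).1 w, X = ⟨w, (P n).2.snoc h⟩} := by
    intro n X hX
    rcases hbr n with ⟨_, _, _, hL', _⟩ | ⟨_, _, hL'⟩
    · exact Or.inl (hL' ▸ hX)
    · rw [hL'] at hX
      rcases hX with h | ⟨w, hA, hXeq, _⟩
      · exact Or.inl h
      · exact Or.inr ⟨w, hA, hXeq⟩
  have lemB : ∀ (m k : ℕ) (X : PartialPath A o), k ≤ m → X ∈ (f m).L → X ∉ (f k).L →
      ∃ j, k ≤ j ∧ j < m ∧ ∃ w, ∃ h : A (P j).1 w, X = ⟨w, (P j).2.snoc h⟩ := by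
    intro m
    induction m with
    | zero =>
      intro k X hk hXm hXk
      have : k = 0 := Nat.le_zero.mp hk
      subst this
      exact absurd hXm hXk
    | succ m ihm =>
      intro k X hk hXm hXk
      rcases Nat.eq_or_lt_of_le hk with rfl | hk'
      · exact absurd hXm hXk
      · have hk'' : k ≤ m := Nat.lt_succ_iff.1 hk'
        rcases hsub m hXm with ⟨hXm', _⟩ | ⟨w, hA, hXeq⟩
        · obtain ⟨j, h1, h2, h3⟩ := ihm k X hk'' hXm' hXk
          exact ⟨j, h1, Nat.lt_succ_of_lt h2, h3⟩
        · exact ⟨m, hk'', Nat.lt_succ_self m, w, hA, hXeq⟩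
  have ext2 : ∀ (n m : ℕ) (X : PartialPath A o), n < m → P n = X → P m = X →
      ∃ j, n + 1 ≤ j ∧ j < m ∧ ∃ w, ∃ hA : A (P j).1 w, X = ⟨w, (P j).2.snoc hA⟩ := by
    intro n m X hnm hPn hPm
    have hXn1 : X ∉ (f (n + 1)).L := by
      intro hmem1
      rcases hsub n hmem1 with hdiff | hext
      · exact hdiff.2 hPn.symm
      · obtain ⟨w, hA, hXeq⟩ := hext
        have hlen := congrArg (fun Y : PartialPath A o => Y.2.len) hXeq
        simp only [Walk.len_snoc] at hlen
        rw [hPn] at hlen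
        omega
    exact lemB m (n + 1) X hnm (by rw [← hPm]; exact hmem m) hXn1
  have claim : ∀ (ℓ : ℕ) (X : PartialPath A o) (n m : ℕ), X.2.len ≤ ℓ → n < m →
      P n = X → P m = X → False := by
    intro ℓ
    induction ℓ with
    | zero =>
      intro X n m hlen hnm hPn hPm
      obtain ⟨j, _, _, w, hA, hXeq⟩ := ext2 n m X hnm hPn hPm
      have := congrArg (fun Y : PartialPath A o => Y.2.len) hXeq
      simp only [Walk.len_snoc] at this
      omega
    | succ ℓ ihl =>
      intro X n m hlen hnm hPn hPm
      obtain ⟨j, hj1, hj2, w, hA, hXeq⟩ := ext2 n m X hnm hPn hPm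
      have hX0 : X ∉ (f 0).L := by
        rw [h0]
        intro hmem0
        have hXnil : X = ⟨o, Walk.nil o⟩ := hmem0
        rw [hXnil] at hXeq
        have := congrArg (fun Y : PartialPath A o => Y.2.len) hXeq
        simp only [Walk.len_snoc, Walk.len] at this
        omega
      obtain ⟨j', hj'0, hj'n, w', hA', hXeq'⟩ :=
        lemB n 0 X (Nat.zero_le n) (by rw [← hPn]; exact hmem n) hX0
      have e1 : X.2.unsnoc = some (P j) := by
        rw [hXeq]; exact Walk.unsnoc_snoc (P j).2 hA
      have e2 : X.2.unsnoc = some (P j') := by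
        rw [hXeq']; exact Walk.unsnoc_snoc (P j').2 hA'
      have hPP : P j' = P j := Option.some.inj (e2.symm.trans e1)
      have hlenj : (P j).2.len ≤ ℓ := by
        have := congrArg (fun Y : PartialPath A o => Y.2.len) hXeq
        simp only [Walk.len_snoc] at this
        omega
      exact ihl (P j) j' j hlenj (by omega) hPP rfl
  have hinj : Function.Injective P := by
    intro a b hab
    by_contra hne
    rcases Nat.lt_or_ge a b with h | h
    · exact claim (P b).2.len (P b) a b le_rfl h hab rfl
    · exact claim (P a).2.len (P a) b a le_rfl
        (lt_of_le_of_ne h (fun hba => hne hba.symm)) hab.symm rfl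
  haveI := Finite.of_injective P hinj
  exact not_finite ℕ

end Aux

/-- if the digraph is (finite and) acyclic, the enumeration
algorithm terminates after finitely many iterations, and upon termination the
incumbent `c_od^UB` equals the cost of an optimal feasible `o`–`d` path if one
exists, and `+∞` otherwise. -/
theorem enumeration_algorithm_correct
    {M : Type} (op : M → M → M) (e : M) (le : M → M → Prop)
    -- lattice ordered monoid axioms
    (hassoc : ∀ x y z : M, op (op x y) z = op x (op y z))
    (hneutral : ∀ x : M, op e x = x ∧ op x e = x)
    (hrefl : ∀ x : M, le x x)
    (htrans : ∀ x y z : M, le x y → le y z → le x z)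
    (hantisymm : ∀ x y : M, le x y → le y x → x = y)
    (hmeet : ∀ x y : M, ∃ m : M, le m x ∧ le m y ∧
      ∀ z : M, le z x → le z y → le z m)
    (hjoin : ∀ x y : M, ∃ j : M, le x j ∧ le y j ∧
      ∀ z : M, le x z → le y z → le j z)
    (hcompat : ∀ x y z : M, le x y → le (op x z) (op y z) ∧ le (op z x) (op z y))
    -- non-decreasing cost and infeasibility functions
    (c : M → ℝ) (ρ : M → ℕ)
    (hρ01 : ∀ x : M, ρ x = 0 ∨ ρ x = 1)
    (hc_mono : ∀ x y : M, le x y → c x ≤ c y)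
    (hρ_mono : ∀ x y : M, le x y → ρ x ≤ ρ y)
    -- a finite acyclic digraph with arc resources
    {V : Type} [Fintype V] (A : V → V → Prop)
    (hacyclic : ∀ v : V, ¬ Relation.TransGen A v v)
    (q : ∀ u v : V, A u v → M) (o d : V)
    -- valid sets of lower bounds
    (B : V → Set M)
    (hB : ∀ (v : V) (Q : Walk V A v d), ∃ b ∈ B v, le b (Q.res op e q)) :
    -- termination: there is no infinite execution from the initial state
    (¬ ∃ f : ℕ → AlgState V A o, f 0 = initState A o ∧
        ∀ n, algStep op e c ρ A q o d B (f n) (f (n + 1))) ∧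
    -- correctness: upon termination (empty list), the incumbent equals the
    -- optimal value
    (∀ (N : ℕ) (f : ℕ → AlgState V A o), f 0 = initState A o →
        (∀ i < N, algStep op e c ρ A q o d B (f i) (f (i + 1))) →
        (f N).L = ∅ → (f N).ub = optValue op e c ρ A q o d) := by
  constructor
  · exact alg_term op e c ρ A hacyclic q o d B
  · intro N f h0 hsteps hempty
    obtain ⟨hchar, hinv⟩ := alg_inv op e le hassoc hneutral hcompat c ρ hc_mono hρ_mono
      A hacyclic q o d B hB f h0 N hsteps
    unfold optValue
    apply le_antisymm
    · apply le_sInf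
      rintro x ⟨Q, hQ, rfl⟩
      rcases hinv Q hQ with h | ⟨v, Pw, R, -, hmem⟩
      · exact h
      · rw [hempty] at hmem
        exact absurd hmem (Set.notMem_empty _)
    · rcases hchar with h | ⟨Q, hQ, h⟩
      · rw [h]; exact le_top
      · rw [h]; exact sInf_le ⟨Q, hQ, rfl⟩
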